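/- Let R = {[[f(x), g(x)],[0, f(x²)]] : f, g ∈ k[x]} ⊆ M₂(k[x]) and let N be the ideal of strictly upper triangular matrices in R. Then N is a free left R/N-module of rank 1, but a free right R/N-module of rank 2, with basis given (for instance) by the matrix units e₁₂ and x·e₁₂. -/

import Mathlib

open Polynomial

private lemma evenodd_exists {k : Type*} [Field k] (g : Polynomial k) :
    ∃ p : Polynomial k × Polynomial k,
      g = expand k 2 p.1 + X * expand k 2 p.2 := by
  induction g using Polynomial.induction_on' with
  | add p q hp hq =>
    obtain ⟨⟨a, b⟩, hab⟩ := hp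
    obtain ⟨⟨c, d⟩, hcd⟩ := hq
    exact ⟨⟨a + c, b + d⟩, by simp only [map_add]; rw [hab, hcd]; ring⟩
  | monomial n a =>
    rcases Nat.even_or_odd n with ⟨m, hm⟩ | ⟨m, hm⟩
    · refine ⟨⟨monomial m a, 0⟩, ?_⟩
      have h2 : m * 2 = n := by omega
      simp [expand_monomial, h2]
    · refine ⟨⟨0, monomial m a⟩, ?_⟩
      have h2 : m * 2 + 1 = n := by omega
      simp [expand_monomial, X_mul_monomial, h2]

private lemma evenodd_unique {k : Type*} [Field k] (p q : Polynomial k × Polynomial k)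
    (h : expand k 2 p.1 + X * expand k 2 p.2 = expand k 2 q.1 + X * expand k 2 q.2) :
    p = q := by
  have h1 : p.1 = q.1 := by
    ext n
    have := congrArg (fun r => Polynomial.coeff r (2 * n)) h
    rcases Nat.eq_zero_or_pos n with rfl | hn
    · simpa [coeff_expand (by norm_num : (0:ℕ) < 2)] using this
    · have h2 : 2 * n = (2 * n - 1) + 1 := by omega
      rw [coeff_add, coeff_add, coeff_expand_mul' (by norm_num : 0 < 2),
        coeff_expand_mul' (by norm_num : 0 < 2), h2, coeff_X_mul, coeff_X_mul,
        coeff_expand (by norm_num : (0:ℕ) < 2), coeff_expand (by norm_num : (0:ℕ) < 2),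
        if_neg (by omega), if_neg (by omega)] at this
      simpa using this
  have h2 : p.2 = q.2 := by
    rw [h1] at h
    have hX : X * expand k 2 p.2 = X * expand k 2 q.2 := by
      exact add_left_cancel h
    have := mul_left_cancel₀ (Polynomial.X_ne_zero) hX
    exact expand_injective (by norm_num) this
  exact Prod.ext h1 h2

theorem nilradical_free_ranks (k : Type*) [Field k] :
    let c : Polynomial k → Matrix (Fin 2) (Fin 2) (Polynomial k) :=
      fun f => !![f, 0; 0, f.comp (Polynomial.X ^ 2)]
    let e₁₂ : Matrix (Fin 2) (Fin 2) (Polynomial k) := !![0, 1; 0, 0]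
    let Nset : Set (Matrix (Fin 2) (Fin 2) (Polynomial k)) :=
      {M | ∃ g : Polynomial k, M = !![0, g; 0, 0]}
    (∀ n ∈ Nset, ∃! f : Polynomial k, n = c f * e₁₂) ∧
    (∀ n ∈ Nset, ∃! p : Polynomial k × Polynomial k,
      n = e₁₂ * c p.1 + (((Polynomial.X : Polynomial k)) • e₁₂) * c p.2) := by
  intro c e₁₂ Nset
  have hc : ∀ f : Polynomial k, c f * e₁₂ = !![0, f; 0, 0] := by
    intro f
    show !![f, 0; 0, f.comp (X ^ 2)] * !![0, 1; 0, 0] = _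
    rw [Matrix.mul_fin_two]
    simp
  have hr : ∀ f : Polynomial k, e₁₂ * c f = !![0, f.comp (X ^ 2); 0, 0] := by
    intro f
    show !![0, 1; 0, 0] * !![f, 0; 0, f.comp (X ^ 2)] = _
    rw [Matrix.mul_fin_two]
    simp
  have entry : ∀ a b : Polynomial k,
      (!![0, a; 0, 0] : Matrix (Fin 2) (Fin 2) (Polynomial k)) = !![0, b; 0, 0] → a = b := by
    intro a b hab
    have := congrFun (congrFun hab 0) 1
    simpa using this
  constructor
  · rintro n ⟨g, rfl⟩
    refine ⟨g, (hc g).symm, ?_⟩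
    intro f hf
    have hf' : !![0, g; 0, 0] = c f * e₁₂ := hf
    rw [hc] at hf'
    exact (entry _ _ hf').symm
  · rintro n ⟨g, rfl⟩
    have key : ∀ p : Polynomial k × Polynomial k,
        e₁₂ * c p.1 + (((Polynomial.X : Polynomial k)) • e₁₂) * c p.2 =
          !![0, expand k 2 p.1 + X * expand k 2 p.2; 0, 0] := by
      intro p
      rw [Matrix.smul_mul, hr, hr]
      ext i j
      fin_cases i <;> fin_cases j <;>
        simp [expand_eq_comp_X_pow, Matrix.smul_apply, smul_eq_mul]
    obtain ⟨p, hp⟩ := evenodd_exists g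
    refine ⟨p, show _ = _ by rw [key, ← hp], ?_⟩
    intro q hq
    have hq' : !![0, g; 0, 0] = e₁₂ * c q.1 + (((Polynomial.X : Polynomial k)) • e₁₂) * c q.2 := hq
    rw [key] at hq'
    apply evenodd_unique
    rw [← entry _ _ hq', hp]
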